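/- If Φ, Ψ ∈ S_p* for some p ≥ 0, then their Wick product Φ◇Ψ, defined by (Φ◇Ψ)^(σ) = ∑_{τ⊆σ} Φ̂(τ) Ψ̂(σ\τ), belongs to S_{p+1}*, with ‖Φ◇Ψ‖_{-(p+1)}² ≤ ‖Φ‖_{-p}² ‖Ψ‖_{-p}² ∑_{σ∈Γ} λ_σ^{-2}. -/

import Mathlib

open scoped BigOperators

/-- `lam σ = ∏_{k∈σ} (1+k)`. -/
noncomputable def lam (σ : Finset ℕ) : ℝ := ∏ k ∈ σ, (1 + k : ℝ)

lemma lam_pos (σ : Finset ℕ) : 0 < lam σ :=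
  Finset.prod_pos (fun k _ => by positivity)

lemma lam_mul_sdiff {τ σ : Finset ℕ} (h : τ ⊆ σ) : lam τ * lam (σ \ τ) = lam σ := by
  rw [mul_comm]; exact Finset.prod_sdiff h

set_option maxHeartbeats 1000000 in
lemma summable_g : Summable (fun k : ℕ => ((1 + (k : ℝ)) ^ 2)⁻¹) := by
  have h0 : Summable (fun n : ℕ => 1 / (n : ℝ) ^ 2) :=
    Real.summable_one_div_nat_pow.mpr one_lt_two
  have h1 : Summable (fun n : ℕ => 1 / ((n + 1 : ℕ) : ℝ) ^ 2) :=
    (summable_nat_add_iff 1).mpr h0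
  refine h1.congr fun k => ?_
  push_cast
  rw [one_div, add_comm (k : ℝ) 1]

lemma summable_lam_neg_two : Summable (fun σ : Finset ℕ => lam σ ^ (-(2 : ℝ))) := by
  set g : ℕ → ℝ := fun k => ((1 + (k : ℝ)) ^ 2)⁻¹ with hg
  have hgnn : ∀ k, 0 ≤ g k := fun k => by positivity
  have hrw : ∀ σ : Finset ℕ, lam σ ^ (-(2 : ℝ)) = ∏ k ∈ σ, g k := by
    intro σ
    rw [show ((2 : ℝ)) = ((2 : ℕ) : ℝ) by norm_num, Real.rpow_neg (lam_pos σ).le,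
      Real.rpow_natCast, lam, ← Finset.prod_pow, ← Finset.prod_inv_distrib]
  have hC : ∀ u : Finset (Finset ℕ), ∑ σ ∈ u, ∏ k ∈ σ, g k ≤ Real.exp (∑' k, g k) := by
    intro u
    set N : ℕ := u.sup (fun σ => σ.sup id) + 1 with hN
    have hsub : u ⊆ (Finset.range N).powerset := by
      intro σ hσ
      rw [Finset.mem_powerset]
      intro k hk
      rw [Finset.mem_range, hN]
      have : k ≤ σ.sup id := Finset.le_sup (f := id) hk
      have h2 : σ.sup id ≤ u.sup (fun σ => σ.sup id) := Finset.le_sup hσ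
      omega
    calc ∑ σ ∈ u, ∏ k ∈ σ, g k
        ≤ ∑ σ ∈ (Finset.range N).powerset, ∏ k ∈ σ, g k :=
          Finset.sum_le_sum_of_subset_of_nonneg hsub
            (fun σ _ _ => Finset.prod_nonneg fun k _ => hgnn k)
      _ = ∏ k ∈ Finset.range N, (g k + 1) := by
          rw [Finset.prod_add]
          exact Finset.sum_congr rfl fun t _ => by simp
      _ ≤ ∏ k ∈ Finset.range N, Real.exp (g k) :=
          Finset.prod_le_prod (fun k _ => by positivity)
            (fun k _ => Real.add_one_le_exp (g k))
      _ = Real.exp (∑ k ∈ Finset.range N, g k) := (Real.exp_sum _ _).symm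
      _ ≤ Real.exp (∑' k, g k) :=
          Real.exp_le_exp.mpr (Summable.sum_le_tsum _ (fun k _ => hgnn k) summable_g)
  have : Summable (fun σ : Finset ℕ => ∏ k ∈ σ, g k) :=
    summable_of_sum_le (fun σ => Finset.prod_nonneg fun k _ => hgnn k) hC
  exact this.congr fun σ => (hrw σ).symm

/-- **The Wick product maps `S_p* × S_p*` to `S_{p+1}*`.** Represent `Φ, Ψ ∈ S_p*` by
their Fock transforms `a = Φ̂`, `b = Ψ̂`, so that `‖Φ‖_{-p}² = ∑_σ λ_σ^{-2p}|a σ|² < ∞`.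
The Wick product has Fock transform `(Φ◇Ψ)^(σ) = ∑_{τ⊆σ} a(τ) b(σ\\τ)`. Then
`Φ◇Ψ ∈ S_{p+1}*` with `‖Φ◇Ψ‖_{-(p+1)}² ≤ ‖Φ‖_{-p}² ‖Ψ‖_{-p}² ∑_σ λ_σ^{-2}`. -/
theorem stmt17 (p : ℝ) (hp : 0 ≤ p) (a b : Finset ℕ → ℂ)
    (ha : Summable (fun σ : Finset ℕ => lam σ ^ (-(2 * p)) * ‖a σ‖ ^ 2))
    (hb : Summable (fun σ : Finset ℕ => lam σ ^ (-(2 * p)) * ‖b σ‖ ^ 2)) :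
    Summable (fun σ : Finset ℕ =>
      lam σ ^ (-(2 * (p + 1))) * ‖∑ τ ∈ σ.powerset, a τ * b (σ \ τ)‖ ^ 2) ∧
    (∑' σ : Finset ℕ,
        lam σ ^ (-(2 * (p + 1))) * ‖∑ τ ∈ σ.powerset, a τ * b (σ \ τ)‖ ^ 2) ≤
      (∑' σ : Finset ℕ, lam σ ^ (-(2 * p)) * ‖a σ‖ ^ 2) *
        (∑' σ : Finset ℕ, lam σ ^ (-(2 * p)) * ‖b σ‖ ^ 2) *
          (∑' σ : Finset ℕ, lam σ ^ (-(2 : ℝ))) := by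
  set fa : Finset ℕ → ℝ := fun σ => lam σ ^ (-(2 * p)) * ‖a σ‖ ^ 2 with hfa
  set fb : Finset ℕ → ℝ := fun σ => lam σ ^ (-(2 * p)) * ‖b σ‖ ^ 2 with hfb
  have hfann : ∀ σ, 0 ≤ fa σ := fun σ =>
    mul_nonneg (Real.rpow_nonneg (lam_pos σ).le _) (pow_nonneg (norm_nonneg _) 2)
  have hfbnn : ∀ σ, 0 ≤ fb σ := fun σ =>
    mul_nonneg (Real.rpow_nonneg (lam_pos σ).le _) (pow_nonneg (norm_nonneg _) 2)
  set A : ℝ := ∑' σ, fa σ with hA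
  set B : ℝ := ∑' σ, fb σ with hB
  have hAnn : 0 ≤ A := tsum_nonneg hfann
  have hBnn : 0 ≤ B := tsum_nonneg hfbnn
  have key : ∀ σ : Finset ℕ,
      lam σ ^ (-(2 * (p + 1))) * ‖∑ τ ∈ σ.powerset, a τ * b (σ \ τ)‖ ^ 2
        ≤ A * B * lam σ ^ (-(2 : ℝ)) := by
    intro σ
    set x : Finset ℕ → ℝ := fun τ => lam τ ^ (-p) * ‖a τ‖ with hx
    set y : Finset ℕ → ℝ := fun τ => lam (σ \ τ) ^ (-p) * ‖b (σ \ τ)‖ with hy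
    have hnorm1 : ‖∑ τ ∈ σ.powerset, a τ * b (σ \ τ)‖
        ≤ lam σ ^ p * ∑ τ ∈ σ.powerset, x τ * y τ := by
      refine (norm_sum_le _ _).trans ?_
      rw [Finset.mul_sum]
      refine Finset.sum_le_sum fun τ hτ => ?_
      have hτσ : τ ⊆ σ := Finset.mem_powerset.mp hτ
      have h1 : lam σ ^ p * (x τ * y τ) = ‖a τ‖ * ‖b (σ \ τ)‖ := by
        rw [hx, hy]
        have : lam τ ^ (-p) * lam (σ \ τ) ^ (-p) = lam σ ^ (-p) := by
          rw [← Real.mul_rpow (lam_pos τ).le (lam_pos _).le, lam_mul_sdiff hτσ]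
        have h2 : lam σ ^ p * (lam τ ^ (-p) * lam (σ \ τ) ^ (-p)) = 1 := by
          rw [this, ← Real.rpow_add (lam_pos σ)]
          simp
        calc lam σ ^ p * (lam τ ^ (-p) * ‖a τ‖ * (lam (σ \ τ) ^ (-p) * ‖b (σ \ τ)‖))
            = lam σ ^ p * (lam τ ^ (-p) * lam (σ \ τ) ^ (-p)) * (‖a τ‖ * ‖b (σ \ τ)‖) := by
              ring
          _ = ‖a τ‖ * ‖b (σ \ τ)‖ := by rw [h2, one_mul]
      rw [h1, ← norm_mul]
    have hsq : ‖∑ τ ∈ σ.powerset, a τ * b (σ \ τ)‖ ^ 2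
        ≤ lam σ ^ (2 * p) * ((∑ τ ∈ σ.powerset, x τ ^ 2) * ∑ τ ∈ σ.powerset, y τ ^ 2) := by
      calc ‖∑ τ ∈ σ.powerset, a τ * b (σ \ τ)‖ ^ 2
          ≤ (lam σ ^ p * ∑ τ ∈ σ.powerset, x τ * y τ) ^ 2 :=
            pow_le_pow_left₀ (norm_nonneg _) hnorm1 2
        _ = (lam σ ^ p) ^ 2 * (∑ τ ∈ σ.powerset, x τ * y τ) ^ 2 := by ring
        _ ≤ (lam σ ^ p) ^ 2 * ((∑ τ ∈ σ.powerset, x τ ^ 2) * ∑ τ ∈ σ.powerset, y τ ^ 2) := by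
            refine mul_le_mul_of_nonneg_left ?_ (by positivity)
            exact Finset.sum_mul_sq_le_sq_mul_sq _ _ _
        _ = lam σ ^ (2 * p) * ((∑ τ ∈ σ.powerset, x τ ^ 2) * ∑ τ ∈ σ.powerset, y τ ^ 2) := by
            rw [two_mul, Real.rpow_add (lam_pos σ), sq]
    have hxA : ∑ τ ∈ σ.powerset, x τ ^ 2 ≤ A := by
      have : ∀ τ : Finset ℕ, x τ ^ 2 = fa τ := by
        intro τ
        rw [hx, hfa, mul_pow, sq (lam τ ^ (-p)), ← Real.rpow_add (lam_pos τ)]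
        have h0 : -p + -p = -(2 * p) := by ring
        rw [h0]
      calc ∑ τ ∈ σ.powerset, x τ ^ 2 = ∑ τ ∈ σ.powerset, fa τ :=
            Finset.sum_congr rfl fun τ _ => this τ
        _ ≤ A := Summable.sum_le_tsum _ (fun τ _ => hfann τ) ha
    have hyB : ∑ τ ∈ σ.powerset, y τ ^ 2 ≤ B := by
      have h1 : ∀ τ : Finset ℕ, y τ ^ 2 = fb (σ \ τ) := by
        intro τ
        rw [hy, hfb, mul_pow, sq (lam (σ \ τ) ^ (-p)), ← Real.rpow_add (lam_pos _)]
        have h0 : -p + -p = -(2 * p) := by ring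
        rw [h0]
      have h2 : ∑ τ ∈ σ.powerset, fb (σ \ τ) = ∑ τ ∈ σ.powerset, fb τ := by
        refine Finset.sum_bij' (fun τ _ => σ \ τ) (fun τ _ => σ \ τ) ?_ ?_ ?_ ?_ ?_
        · intro τ hτ; exact Finset.mem_powerset.mpr (by simp)
        · intro τ hτ; exact Finset.mem_powerset.mpr (by simp)
        · intro τ hτ; exact Finset.sdiff_sdiff_eq_self (Finset.mem_powerset.mp hτ)
        · intro τ hτ; exact Finset.sdiff_sdiff_eq_self (Finset.mem_powerset.mp hτ)
        · intro τ _; rfl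
      calc ∑ τ ∈ σ.powerset, y τ ^ 2 = ∑ τ ∈ σ.powerset, fb (σ \ τ) :=
            Finset.sum_congr rfl fun τ _ => h1 τ
        _ = ∑ τ ∈ σ.powerset, fb τ := h2
        _ ≤ B := Summable.sum_le_tsum _ (fun τ _ => hfbnn τ) hb
    have hxnn : 0 ≤ ∑ τ ∈ σ.powerset, x τ ^ 2 :=
      Finset.sum_nonneg fun τ _ => sq_nonneg _
    have hynn : 0 ≤ ∑ τ ∈ σ.powerset, y τ ^ 2 :=
      Finset.sum_nonneg fun τ _ => sq_nonneg _
    calc lam σ ^ (-(2 * (p + 1))) * ‖∑ τ ∈ σ.powerset, a τ * b (σ \ τ)‖ ^ 2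
        ≤ lam σ ^ (-(2 * (p + 1))) *
            (lam σ ^ (2 * p) * ((∑ τ ∈ σ.powerset, x τ ^ 2) * ∑ τ ∈ σ.powerset, y τ ^ 2)) :=
          mul_le_mul_of_nonneg_left hsq (Real.rpow_nonneg (lam_pos σ).le _)
      _ = lam σ ^ (-(2 : ℝ)) * ((∑ τ ∈ σ.powerset, x τ ^ 2) * ∑ τ ∈ σ.powerset, y τ ^ 2) := by
          rw [← mul_assoc, ← Real.rpow_add (lam_pos σ)]
          have h0 : -(2 * (p + 1)) + 2 * p = (-2 : ℝ) := by ring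
          rw [h0]
      _ ≤ lam σ ^ (-(2 : ℝ)) * (A * B) := by
          refine mul_le_mul_of_nonneg_left ?_ (Real.rpow_nonneg (lam_pos σ).le _)
          exact mul_le_mul hxA hyB hynn hAnn
      _ = A * B * lam σ ^ (-(2 : ℝ)) := by ring
  have hnnL : ∀ σ : Finset ℕ,
      0 ≤ lam σ ^ (-(2 * (p + 1))) * ‖∑ τ ∈ σ.powerset, a τ * b (σ \ τ)‖ ^ 2 :=
    fun σ => mul_nonneg (Real.rpow_nonneg (lam_pos σ).le _) (pow_nonneg (norm_nonneg _) 2)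
  have hsummR : Summable (fun σ : Finset ℕ => A * B * lam σ ^ (-(2 : ℝ))) :=
    summable_lam_neg_two.mul_left (A * B)
  have hsummL : Summable (fun σ : Finset ℕ =>
      lam σ ^ (-(2 * (p + 1))) * ‖∑ τ ∈ σ.powerset, a τ * b (σ \ τ)‖ ^ 2) :=
    Summable.of_nonneg_of_le hnnL key hsummR
  refine ⟨hsummL, ?_⟩
  calc (∑' σ : Finset ℕ,
        lam σ ^ (-(2 * (p + 1))) * ‖∑ τ ∈ σ.powerset, a τ * b (σ \ τ)‖ ^ 2)
      ≤ ∑' σ : Finset ℕ, A * B * lam σ ^ (-(2 : ℝ)) := Summable.tsum_le_tsum key hsummL hsummR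
    _ = A * B * ∑' σ : Finset ℕ, lam σ ^ (-(2 : ℝ)) := tsum_mul_left
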